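/- arXiv:1912.08448 — 2 statements merged into one kernel-verified Lean document; each statement's English description precedes it below -/
import Mathlib

section
/- Let p be a prime, A a finite abelian p-group, χ₀ : A → ℤ/p the characteristic function of 0, M := fdeg(χ₀), and f : A → ℤ/p. If fdeg(f) < M, then ∑_{x ∈ A} f(x) = 0 in ℤ/p. -/
open scoped BigOperators

/-- Action of the integral group ring `ℤ[A]` on functions `A → B`:
`(τ_a * f)(x) = f(x + a)`, extended linearly. -/
noncomputable def groupRingAct {A B : Type*} [AddCommGroup A] [AddCommGroup B]
    (r : AddMonoidAlgebra ℤ A) (f : A → B) : A → B :=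
  fun x => r.coeff.sum fun a z => z • f (x + a)

/-- The augmentation ideal of the group ring `R[A]`. -/
noncomputable def augIdealR (R : Type*) (A : Type*) [CommRing R] [AddCommGroup A] :
    Ideal (AddMonoidAlgebra R A) :=
  Ideal.span {r : AddMonoidAlgebra R A | ∃ a : A, r = AddMonoidAlgebra.single a 1 - 1}

/-- The augmentation ideal of `ℤ[A]`. -/
noncomputable def augIdeal (A : Type*) [AddCommGroup A] : Ideal (AddMonoidAlgebra ℤ A) :=
  augIdealR ℤ A

/-- The functional degree of `f : A → B`: the least `n` with `I^(n+1) * f = 0`,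
where `I` is the augmentation ideal of `ℤ[A]`; `⊤` if there is no such `n`. -/
noncomputable def fdeg {A B : Type*} [AddCommGroup A] [AddCommGroup B] (f : A → B) : ℕ∞ :=
  sInf {N : ℕ∞ | ∃ n : ℕ, N = (n : ℕ∞) ∧
    ∀ r ∈ augIdeal A ^ (n + 1), groupRingAct r f = 0}

section Aux

variable {A : Type*} [AddCommGroup A] [Fintype A] [DecidableEq A]
variable {B : Type*} [AddCommGroup B]

lemma groupRingAct_eq (r : AddMonoidAlgebra ℤ A) (f : A → B) :
    groupRingAct r f = fun x => ∑ a : A, (r.coeff a) • f (x + a) := by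
  funext x
  exact Finsupp.sum_fintype _ _ (fun a => by simp)

lemma groupRingAct_zero (f : A → B) : groupRingAct (0 : AddMonoidAlgebra ℤ A) f = 0 := by
  funext x; simp [groupRingAct_eq]

lemma groupRingAct_add (r s : AddMonoidAlgebra ℤ A) (f : A → B) :
    groupRingAct (r + s) f = groupRingAct r f + groupRingAct s f := by
  funext x
  have h : ∀ a : A, (r + s).coeff a = r.coeff a + s.coeff a := fun _ => rfl
  simp [groupRingAct_eq, h, add_smul, Finset.sum_add_distrib]

lemma groupRingAct_sub (r s : AddMonoidAlgebra ℤ A) (f : A → B) :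
    groupRingAct (r - s) f = groupRingAct r f - groupRingAct s f := by
  funext x
  have h : ∀ a : A, (r - s).coeff a = r.coeff a - s.coeff a := fun _ => rfl
  simp [groupRingAct_eq, h, sub_smul, Finset.sum_sub_distrib]

lemma groupRingAct_addf (r : AddMonoidAlgebra ℤ A) (f g : A → B) :
    groupRingAct r (f + g) = groupRingAct r f + groupRingAct r g := by
  funext x
  simp [groupRingAct_eq, smul_add, Finset.sum_add_distrib]

lemma groupRingAct_single (a : A) (z : ℤ) (f : A → B) :
    groupRingAct (AddMonoidAlgebra.single a z : AddMonoidAlgebra ℤ A) f = fun x => z • f (x + a) := by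
  funext x
  simp [groupRingAct_eq, AddMonoidAlgebra.coeff_single, Finsupp.single_apply, ite_smul]

lemma groupRingAct_mul (r s : AddMonoidAlgebra ℤ A) (f : A → B) :
    groupRingAct (r * s) f = groupRingAct r (groupRingAct s f) := by
  induction r using AddMonoidAlgebra.induction_linear with
  | zero => rw [zero_mul]; simp [groupRingAct_zero]
  | add r1 r2 h1 h2 => rw [add_mul, groupRingAct_add, groupRingAct_add, h1, h2]
  | single a y =>
    induction s using AddMonoidAlgebra.induction_linear with
    | zero =>
      rw [mul_zero]
      funext x
      simp [groupRingAct_zero, groupRingAct_single]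
    | add s1 s2 h1 h2 =>
      rw [mul_add, groupRingAct_add, h1, h2, groupRingAct_add, groupRingAct_addf]
    | single b z =>
      rw [AddMonoidAlgebra.single_mul_single, groupRingAct_single, groupRingAct_single,
        groupRingAct_single]
      funext x
      dsimp only
      rw [mul_smul, add_assoc]

end Aux

section Main

variable {p : ℕ} {A : Type*} [AddCommGroup A] [Fintype A] [DecidableEq A]

lemma groupRingAct_eq_zero_of_cast (r : AddMonoidAlgebra ℤ A) (f : A → ZMod p)
    (h : ∀ a : A, ((r.coeff a : ℤ) : ZMod p) = 0) : groupRingAct r f = 0 := by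
  funext x
  rw [groupRingAct_eq]
  refine Finset.sum_eq_zero fun a _ => ?_
  rw [zsmul_eq_mul, h a, zero_mul]

lemma kills_chi (hp : p.Prime)
    (hA : ∀ x : A, ∃ n : ℕ, p ^ n • x = 0) (f : A → ZMod p) (hc : ∑ x : A, f x ≠ 0)
    (n : ℕ) (hkill : ∀ r ∈ augIdeal A ^ (n + 1), groupRingAct r f = 0) :
    ∀ r ∈ augIdeal A ^ (n + 1),
      groupRingAct r (fun x : A => if x = 0 then (1 : ZMod p) else 0) = 0 := by
  haveI : Fact p.Prime := ⟨hp⟩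
  haveI : NeZero p := ⟨hp.ne_zero⟩
  set χ : A → ZMod p := fun x => if x = 0 then (1 : ZMod p) else 0 with hχ
  set φ : AddMonoidAlgebra ℤ A →+* AddMonoidAlgebra (ZMod p) A :=
    AddMonoidAlgebra.liftNCRingHom
      ((AddMonoidAlgebra.singleZeroRingHom).comp (Int.castRingHom (ZMod p)))
      (AddMonoidAlgebra.of (ZMod p) A) (fun _ _ => Commute.all _ _) with hφdef
  have φ_single : ∀ (a : A) (z : ℤ),
      φ (AddMonoidAlgebra.single a z) = AddMonoidAlgebra.single a ((z : ZMod p)) := by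
    intro a z
    show AddMonoidAlgebra.liftNC _ _ _ = _
    rw [AddMonoidAlgebra.liftNC_single]
    show AddMonoidAlgebra.single 0 ((z : ZMod p)) * AddMonoidAlgebra.single a 1 = _
    rw [AddMonoidAlgebra.single_mul_single, zero_add, mul_one]
  have φ_apply : ∀ (r : AddMonoidAlgebra ℤ A) (a : A), (φ r).coeff a = ((r.coeff a : ℤ) : ZMod p) := by
    intro r
    induction r using AddMonoidAlgebra.induction_linear with
    | zero =>
      intro a
      rw [map_zero]
      show (0 : ZMod p) = (((0 : ℤ)) : ZMod p)
      rw [Int.cast_zero]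
    | add r1 r2 h1 h2 =>
      intro a
      have e1 : (φ r1 + φ r2).coeff a = (φ r1).coeff a + (φ r2).coeff a := rfl
      have e2 : ((r1 + r2).coeff a : ℤ) = (r1.coeff a : ℤ) + r2.coeff a := rfl
      rw [map_add, e1, e2, h1 a, h2 a, Int.cast_add]
    | single b z =>
      intro a
      rw [φ_single]
      simp only [AddMonoidAlgebra.coeff_single, Finsupp.single_apply]
      split <;> simp
  haveI : CharP (AddMonoidAlgebra (ZMod p) A) p :=
    charP_of_injective_ringHom
      (f := (AddMonoidAlgebra.singleZeroRingHom : ZMod p →+* AddMonoidAlgebra (ZMod p) A))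
      (fun x y h => AddMonoidAlgebra.single_right_injective (m := (0 : A)) h) p
  have nilp : ∀ a : A, IsNilpotent ((AddMonoidAlgebra.single a (1 : ZMod p) : AddMonoidAlgebra (ZMod p) A) - 1) := by
    intro a
    obtain ⟨m, hm⟩ := hA a
    refine ⟨p ^ m, ?_⟩
    rw [sub_pow_char_pow, AddMonoidAlgebra.single_pow, one_pow, hm]
    show AddMonoidAlgebra.single (0 : A) (1 : ZMod p) - 1 ^ p ^ m = 0
    rw [one_pow, ← AddMonoidAlgebra.one_def, sub_self]
  set rf : AddMonoidAlgebra ℤ A :=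
    ∑ b : A, AddMonoidAlgebra.single b (((f (-b)).val : ℤ)) with hrf
  have rf_apply : ∀ a : A, rf.coeff a = ((f (-a)).val : ℤ) := by
    intro a
    have e : rf.coeff a = ∑ b : A, (AddMonoidAlgebra.single b (((f (-b)).val : ℤ))).coeff a := by
      rw [hrf, AddMonoidAlgebra.coeff_sum]; exact Finsupp.finset_sum_apply _ _ _
    rw [e]
    simp [AddMonoidAlgebra.coeff_single, Finsupp.single_apply]
  have castval : ∀ y : ZMod p, (((y.val : ℤ)) : ZMod p) = y := by
    intro y
    rw [Int.cast_natCast]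
    exact ZMod.natCast_rightInverse y
  have hrf_act : groupRingAct rf χ = f := by
    funext x
    simp only [groupRingAct_eq]
    have step : ∀ a : A, rf.coeff a • χ (x + a) = if a = -x then f x else 0 := by
      intro a
      by_cases hax : a = -x
      · subst hax
        rw [if_pos rfl, rf_apply, neg_neg]
        simp only [hχ, add_neg_cancel, if_pos rfl]
        rw [zsmul_eq_mul, mul_one, castval]
      · rw [if_neg hax]
        simp only [hχ]
        rw [if_neg, smul_zero]
        exact fun h => hax (eq_neg_of_add_eq_zero_right h)
    rw [Finset.sum_congr rfl (fun a _ => step a)]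
    simp
  set c : ZMod p := ∑ x : A, f x with hcdef
  have hsum : ∑ b : A, f (-b) = c := Fintype.sum_equiv (Equiv.neg A) _ _ (fun x => by simp)
  have hφrf : φ rf = (∑ b : A, f (-b) • ((AddMonoidAlgebra.single b (1 : ZMod p) : AddMonoidAlgebra (ZMod p) A) - 1)) + c • 1 := by
    rw [hrf, map_sum]
    have h1 : ∀ b : A, φ (AddMonoidAlgebra.single b (((f (-b)).val : ℤ)))
        = f (-b) • ((AddMonoidAlgebra.single b (1 : ZMod p) : AddMonoidAlgebra (ZMod p) A) - 1) + f (-b) • (1 : AddMonoidAlgebra (ZMod p) A) := by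
      intro b
      rw [φ_single, castval, smul_sub, sub_add_cancel, AddMonoidAlgebra.smul_single, smul_eq_mul,
        mul_one]
    rw [Finset.sum_congr rfl (fun b _ => h1 b), Finset.sum_add_distrib, ← Finset.sum_smul,
      hsum]
  have hw : IsNilpotent (∑ b : A, f (-b) • ((AddMonoidAlgebra.single b (1 : ZMod p) : AddMonoidAlgebra (ZMod p) A) - 1)) := by
    rw [← mem_nilradical]
    exact sum_mem fun b _ => Submodule.smul_of_tower_mem _ _ (mem_nilradical.2 (nilp b))
  have hcu : IsUnit (c • (1 : AddMonoidAlgebra (ZMod p) A)) := by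
    rw [← Algebra.algebraMap_eq_smul_one]
    exact (isUnit_iff_ne_zero.2 hc).map (algebraMap (ZMod p) (AddMonoidAlgebra (ZMod p) A))
  have hunit : IsUnit (φ rf) := by
    rw [hφrf]
    exact IsNilpotent.isUnit_add_right_of_commute hw hcu (Commute.all _ _)
  obtain ⟨sb, hsb⟩ := hunit.exists_left_inv
  set s : AddMonoidAlgebra ℤ A :=
    AddMonoidAlgebra.ofCoeff (Finsupp.mapRange (fun z : ZMod p => (z.val : ℤ)) (by simp) sb.coeff) with hsdef
  have hφs : φ s = sb := by
    ext a
    rw [φ_apply, hsdef, AddMonoidAlgebra.coeff_ofCoeff, Finsupp.mapRange_apply, castval]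
  intro u hu
  have h0 : ∀ a : A, (((u * (s * rf - 1)).coeff a : ℤ) : ZMod p) = 0 := by
    intro a
    rw [← φ_apply]
    have hz : φ (u * (s * rf - 1)) = 0 := by
      rw [map_mul, map_sub, map_mul, hφs, map_one, hsb, sub_self, mul_zero]
    rw [hz]
    rfl
  have h1 : groupRingAct (u * (s * rf - 1)) χ = 0 := groupRingAct_eq_zero_of_cast _ _ h0
  have h2 : groupRingAct (u * (s * rf)) χ = 0 := by
    rw [← mul_assoc, groupRingAct_mul, hrf_act]
    exact hkill _ (Ideal.mul_mem_right _ _ hu)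
  have hdecomp : u * (s * rf) - u * (s * rf - 1) = u := by ring
  calc groupRingAct u χ
      = groupRingAct (u * (s * rf)) χ - groupRingAct (u * (s * rf - 1)) χ := by
        rw [← groupRingAct_sub, hdecomp]
    _ = 0 := by rw [h1, h2, sub_zero]

end Main

theorem sum_eq_zero_of_fdeg_lt {p : ℕ} (hp : p.Prime) {A : Type*} [AddCommGroup A]
    [Fintype A] [DecidableEq A] (hA : ∀ x : A, ∃ n : ℕ, p ^ n • x = 0)
    (f : A → ZMod p)
    (hf : fdeg f < fdeg (fun x : A => if x = 0 then (1 : ZMod p) else 0)) :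
    ∑ x : A, f x = 0 := by
  by_contra hc
  unfold fdeg at hf
  obtain ⟨N, hN, hNlt⟩ := sInf_lt_iff.mp hf
  obtain ⟨n, rfl, hkill⟩ := hN
  have hchi := kills_chi hp hA f hc n hkill
  have hmem : (n : ℕ∞) ∈ {N : ℕ∞ | ∃ m : ℕ, N = (m : ℕ∞) ∧
      ∀ r ∈ augIdeal A ^ (m + 1),
        groupRingAct r (fun x : A => if x = 0 then (1 : ZMod p) else 0) = 0} :=
    ⟨n, rfl, hchi⟩
  exact absurd (sInf_le hmem) (not_le.2 hNlt)
end

section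
/- Let p be a prime, A a finite abelian p-group with |A| > 1, N, r ∈ ℕ, and f_1, …, f_r : A^N → A functions with N > ∑_{i=1}^r fdeg(f_i). Then p divides the cardinality of V(f_1,…,f_r) := {a ∈ A^N : f_1(a) = ⋯ = f_r(a) = 0}. In particular, V(f_1,…,f_r) is not a singleton. -/
open scoped BigOperators

section Act
variable {G B C : Type*} [AddCommGroup G] [AddCommGroup B] [AddCommGroup C]

theorem act_single (a : G) (z : ℤ) (f : G → B) (x : G) :
    groupRingAct (AddMonoidAlgebra.single a z) f x = z • f (x + a) := by
  unfold groupRingAct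
  rw [AddMonoidAlgebra.coeff_single, Finsupp.sum_single_index]
  simp

theorem act_add_left (r s : AddMonoidAlgebra ℤ G) (f : G → B) :
    groupRingAct (r + s) f = groupRingAct r f + groupRingAct s f := by
  funext x
  exact Finsupp.sum_add_index' (fun a => by simp) (fun a b₁ b₂ => add_smul b₁ b₂ _)

theorem act_zero_left (f : G → B) : groupRingAct (0 : AddMonoidAlgebra ℤ G) f = 0 := by
  funext x; simp [groupRingAct]

theorem act_add_right (r : AddMonoidAlgebra ℤ G) (f g : G → B) :
    groupRingAct r (f + g) = groupRingAct r f + groupRingAct r g := by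
  funext x
  simp only [groupRingAct, Pi.add_apply, smul_add]
  exact Finsupp.sum_add

theorem act_zero_right (r : AddMonoidAlgebra ℤ G) :
    groupRingAct r (0 : G → B) = 0 := by
  funext x; simp [groupRingAct]

theorem act_mul (r s : AddMonoidAlgebra ℤ G) (f : G → B) :
    groupRingAct (r * s) f = groupRingAct r (groupRingAct s f) := by
  induction r using AddMonoidAlgebra.induction_linear with
  | zero => simp [act_zero_left]
  | add u v hu hv => rw [add_mul, act_add_left, hu, hv, act_add_left]
  | single a z =>
    induction s using AddMonoidAlgebra.induction_linear with
    | zero => simp [act_zero_left, act_zero_right]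
    | add u v hu hv => rw [mul_add, act_add_left, hu, hv, act_add_left, act_add_right]
    | single b w =>
      funext x
      rw [AddMonoidAlgebra.single_mul_single, act_single, act_single, act_single,
        mul_smul, add_assoc]

theorem act_one (f : G → B) : groupRingAct (1 : AddMonoidAlgebra ℤ G) f = f := by
  funext x
  rw [AddMonoidAlgebra.one_def, act_single]
  simp

/-- The set of group-ring elements sending `f` into an additive subgroup `M`, as an ideal. -/
noncomputable def vIdeal (M : AddSubgroup B) (f : G → B) : Ideal (AddMonoidAlgebra ℤ G) where
  carrier := {r | ∀ x, groupRingAct r f x ∈ M}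
  add_mem' := by
    intro r s hr hs x
    rw [act_add_left]
    exact M.add_mem (hr x) (hs x)
  zero_mem' := by intro x; rw [act_zero_left]; exact M.zero_mem
  smul_mem' := by
    intro c r hr x
    rw [smul_eq_mul, act_mul]
    unfold groupRingAct
    exact AddSubgroup.sum_mem M fun a ha => AddSubgroup.zsmul_mem M (hr _) _

theorem mem_vIdeal_iff {M : AddSubgroup B} {f : G → B} {r} :
    r ∈ vIdeal M f ↔ ∀ x, groupRingAct r f x ∈ M := Iff.rfl

noncomputable def annih (f : G → B) : Ideal (AddMonoidAlgebra ℤ G) := vIdeal ⊥ f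

theorem mem_annih_iff {f : G → B} {r} : r ∈ annih f ↔ groupRingAct r f = 0 := by
  simp only [annih, mem_vIdeal_iff, AddSubgroup.mem_bot, funext_iff]
  exact Iff.rfl

/-- `δ_g = τ_g - 1`. -/
noncomputable def del (g : G) : AddMonoidAlgebra ℤ G := AddMonoidAlgebra.single g 1 - 1

noncomputable def delProd {k : ℕ} (g : Fin k → G) : AddMonoidAlgebra ℤ G := ∏ i, del (g i)

theorem del_mem (g : G) : del g ∈ augIdeal G := Ideal.subset_span ⟨g, rfl⟩

theorem delProd_mem {k : ℕ} (g : Fin k → G) : delProd g ∈ augIdeal G ^ k := by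
  induction k with
  | zero => simpa [delProd] using Submodule.mem_top
  | succ k ih =>
    rw [delProd, Fin.prod_univ_castSucc, pow_succ]
    exact Ideal.mul_mem_mul (ih _) (del_mem _)

/-- Auxiliary ideal `{s | t * s ∈ K}`. -/
noncomputable def mulShift (K : Ideal (AddMonoidAlgebra ℤ G)) (t : AddMonoidAlgebra ℤ G) :
    Ideal (AddMonoidAlgebra ℤ G) where
  carrier := {s | t * s ∈ K}
  add_mem' := by intro a b ha hb; simp only [Set.mem_setOf_eq, mul_add]; exact K.add_mem ha hb
  zero_mem' := by simp
  smul_mem' := by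
    intro c s hs
    simp only [Set.mem_setOf_eq, smul_eq_mul] at *
    rw [mul_left_comm]
    exact K.mul_mem_left c hs
  
theorem pow_aug_le_iff {k : ℕ} {K : Ideal (AddMonoidAlgebra ℤ G)} :
    augIdeal G ^ k ≤ K ↔ ∀ g : Fin k → G, delProd g ∈ K := by
  constructor
  · intro h g; exact h (delProd_mem g)
  · intro h
    induction k generalizing K with
    | zero =>
      rw [pow_zero, Ideal.one_eq_top, top_le_iff, Ideal.eq_top_iff_one]
      simpa [delProd] using h (Fin.elim0)
    | succ k ih =>
      rw [pow_succ]
      refine Ideal.mul_le.mpr fun r hr s hs => ?_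
      have hs' : s ∈ Ideal.span {r : AddMonoidAlgebra ℤ G | ∃ a, r = AddMonoidAlgebra.single a 1 - 1} := hs
      -- reduce s to generators: the set {s | r * s ∈ K} is the ideal mulShift K r
      have : augIdeal G ≤ mulShift K r := by
        rw [augIdeal, augIdealR, Ideal.span_le]
        rintro _ ⟨a, rfl⟩
        -- need r * del a ∈ K; reduce r via ih with K' = mulShift-like {r | r * del a ∈ K}
        have hr' : augIdeal G ^ k ≤ mulShift K (del a) := by
          apply ih
          intro g
          show del a * delProd g ∈ K
          have := h (Fin.snoc g a)
          rw [delProd, Fin.prod_univ_castSucc] at this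
          simpa [mul_comm, delProd] using this
        have := hr' hr
        show r * (AddMonoidAlgebra.single a 1 - 1) ∈ K
        rw [mul_comm]
        exact this
      exact this hs

variable {H : Type*} [AddCommGroup H]

theorem act_post (ψ : B →+ C) (r : AddMonoidAlgebra ℤ G) (f : G → B) (x : G) :
    groupRingAct r (fun y => ψ (f y)) x = ψ (groupRingAct r f x) := by
  unfold groupRingAct
  rw [map_finsuppSum]
  simp

theorem act_comp (φ : G →+ H) (r : AddMonoidAlgebra ℤ G) (w : H → B) (x : G) :
    groupRingAct r (fun y => w (φ y)) x
      = groupRingAct (AddMonoidAlgebra.mapDomainRingHom ℤ φ r) w (φ x) := by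
  induction r using AddMonoidAlgebra.induction_linear with
  | zero => simp [act_zero_left]
  | add u v hu hv => rw [map_add, act_add_left, act_add_left, Pi.add_apply, Pi.add_apply, hu, hv]
  | single a z =>
    have : AddMonoidAlgebra.mapDomainRingHom ℤ φ (AddMonoidAlgebra.single a z)
        = AddMonoidAlgebra.single (φ a) z := by
      simp [AddMonoidAlgebra.mapDomainRingHom, Finsupp.mapDomain_single]
    rw [this, act_single, act_single, map_add]

theorem mapDomain_del (φ : G →+ H) (g : G) :
    AddMonoidAlgebra.mapDomainRingHom ℤ φ (del g) = del (φ g) := by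
  have : AddMonoidAlgebra.mapDomainRingHom ℤ φ (AddMonoidAlgebra.single g 1)
      = AddMonoidAlgebra.single (φ g) 1 := by
    simp [AddMonoidAlgebra.mapDomainRingHom, Finsupp.mapDomain_single]
  rw [del, map_sub, this, map_one, del]

theorem mapDomain_mem_pow (φ : G →+ H) {k : ℕ} {r : AddMonoidAlgebra ℤ G}
    (hr : r ∈ augIdeal G ^ k) :
    AddMonoidAlgebra.mapDomainRingHom ℤ φ r ∈ augIdeal H ^ k := by
  have h1 : Ideal.map (AddMonoidAlgebra.mapDomainRingHom ℤ φ) (augIdeal G) ≤ augIdeal H := by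
    rw [augIdeal, augIdealR, Ideal.map_span, Ideal.span_le]
    rintro _ ⟨_, ⟨a, rfl⟩, rfl⟩
    have := mapDomain_del φ a
    rw [del, del] at this
    rw [this]
    exact del_mem (φ a)
  have h2 := Ideal.mem_map_of_mem (AddMonoidAlgebra.mapDomainRingHom ℤ φ) hr
  rw [Ideal.map_pow] at h2
  exact Ideal.pow_right_mono h1 k h2

theorem ideal_sum_le {ι R' : Type*} [CommRing R'] (s : Finset ι) (f : ι → Ideal R')
    (K : Ideal R') (h : ∀ i ∈ s, f i ≤ K) : ∑ i ∈ s, f i ≤ K := by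
  classical
  induction s using Finset.induction_on with
  | empty => simpa using bot_le
  | insert a s' hns ih =>
    rw [Finset.sum_insert hns]
    rw [Submodule.add_eq_sup]
    exact sup_le (h a (Finset.mem_insert_self a s'))
      (ih fun i hi => h i (Finset.mem_insert_of_mem hi))

theorem ideal_le_sum {ι R' : Type*} [CommRing R'] (s : Finset ι) (f : ι → Ideal R')
    {a : ι} (ha : a ∈ s) : f a ≤ ∑ i ∈ s, f i := by
  classical
  rw [← Finset.sum_erase_add s f ha, Submodule.add_eq_sup]
  exact le_sup_right

theorem ideal_add_pow_le {R' : Type*} [CommRing R'] (K L : Ideal R') (k : ℕ) :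
    (K + L) ^ k ≤ ∑ ij ∈ Finset.HasAntidiagonal.antidiagonal k, K ^ ij.1 * L ^ ij.2 := by
  induction k with
  | zero => simp
  | succ k ih =>
    rw [pow_succ]
    refine le_trans (Ideal.mul_mono_left ih) ?_
    rw [Finset.sum_mul]
    refine ideal_sum_le _ _ _ fun ij hij => ?_
    rw [mul_add]
    rw [Submodule.add_eq_sup]
    rw [Finset.HasAntidiagonal.mem_antidiagonal] at hij
    refine sup_le ?_ ?_
    · have : K ^ ij.1 * L ^ ij.2 * K = K ^ (ij.1 + 1) * L ^ ij.2 := by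
        rw [pow_succ]; ring
      rw [this]
      exact ideal_le_sum (Finset.HasAntidiagonal.antidiagonal (k+1)) (fun q => K ^ q.1 * L ^ q.2)
        (a := (ij.1 + 1, ij.2))
        (Finset.HasAntidiagonal.mem_antidiagonal.mpr (show ij.1 + 1 + ij.2 = k + 1 by omega))
    · have : K ^ ij.1 * L ^ ij.2 * L = K ^ ij.1 * L ^ (ij.2 + 1) := by
        rw [pow_succ]; ring
      rw [this]
      exact ideal_le_sum (Finset.HasAntidiagonal.antidiagonal (k+1)) (fun q => K ^ q.1 * L ^ q.2)
        (a := (ij.1, ij.2 + 1))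
        (Finset.HasAntidiagonal.mem_antidiagonal.mpr (show ij.1 + (ij.2 + 1) = k + 1 by omega))

section Filt
variable {R : Type*} [CommRing R]

theorem act_inl_inr_mul (s t : AddMonoidAlgebra ℤ G) (u v : G → R) (y : G × G) :
    groupRingAct (AddMonoidAlgebra.mapDomainRingHom ℤ (AddMonoidHom.inl G G) s
        * AddMonoidAlgebra.mapDomainRingHom ℤ (AddMonoidHom.inr G G) t)
      (fun z => u z.1 * v z.2) y = groupRingAct s u y.1 * groupRingAct t v y.2 := by
  induction s using AddMonoidAlgebra.induction_linear with
  | zero => simp [act_zero_left]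
  | add u' v' hu hv => rw [map_add, add_mul, act_add_left, act_add_left, Pi.add_apply,
      Pi.add_apply, hu, hv, add_mul]
  | single a z =>
    induction t using AddMonoidAlgebra.induction_linear with
    | zero => simp [act_zero_left]
    | add u' v' hu hv => rw [map_add, mul_add, act_add_left, act_add_left, Pi.add_apply,
        Pi.add_apply, hu, hv, mul_add]
    | single b w =>
      have h1 : AddMonoidAlgebra.mapDomainRingHom ℤ (AddMonoidHom.inl G G)
          (AddMonoidAlgebra.single a z) = AddMonoidAlgebra.single ((a, 0) : G × G) z := by
        simp [AddMonoidAlgebra.mapDomainRingHom, Finsupp.mapDomain_single]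
      have h2 : AddMonoidAlgebra.mapDomainRingHom ℤ (AddMonoidHom.inr G G)
          (AddMonoidAlgebra.single b w) = AddMonoidAlgebra.single ((0, b) : G × G) w := by
        simp [AddMonoidAlgebra.mapDomainRingHom, Finsupp.mapDomain_single]
      rw [h1, h2, AddMonoidAlgebra.single_mul_single, act_single, act_single, act_single]
      have : y + ((a, 0) + (0, b)) = (y.1 + a, y.2 + b) := by
        ext <;> simp
      rw [this]
      simp only [zsmul_eq_mul, Int.cast_mul]
      ring

theorem filt_mul (J : Ideal R) (u v : G → R) (k E : ℕ) (e₁ e₂ : ℕ → ℕ)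
    (hu : ∀ i ≤ k, ∀ r ∈ augIdeal G ^ i, ∀ x, groupRingAct r u x ∈ J ^ (e₁ i))
    (hv : ∀ j ≤ k, ∀ r ∈ augIdeal G ^ j, ∀ x, groupRingAct r v x ∈ J ^ (e₂ j))
    (hE : ∀ i j, i + j = k → E ≤ e₁ i + e₂ j) :
    ∀ r ∈ augIdeal G ^ k, ∀ x, groupRingAct r (fun y => u y * v y) x ∈ J ^ E := by
  intro r hr x
  set Φ₁ := AddMonoidAlgebra.mapDomainRingHom ℤ (AddMonoidHom.inl G G) with hΦ₁
  set Φ₂ := AddMonoidAlgebra.mapDomainRingHom ℤ (AddMonoidHom.inr G G) with hΦ₂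
  set dg : G →+ G × G := (AddMonoidHom.id G).prod (AddMonoidHom.id G) with hdg
  set w : G × G → R := fun z => u z.1 * v z.2 with hw
  have hcomp : groupRingAct r (fun y => u y * v y) x
      = groupRingAct (AddMonoidAlgebra.mapDomainRingHom ℤ dg r) w (dg x) := by
    exact act_comp dg r w x
  rw [hcomp]
  -- the target ideal
  set T : Ideal (AddMonoidAlgebra ℤ (G × G)) := vIdeal (J ^ E).toAddSubgroup w with hT
  have key : augIdeal (G × G) ^ k ≤ T := by
    have hKK : augIdeal (G × G) ≤ Ideal.map Φ₁ (augIdeal G) + Ideal.map Φ₂ (augIdeal G) := by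
      rw [augIdeal, augIdealR, Ideal.span_le]
      rintro _ ⟨gh, rfl⟩
      have hid : (AddMonoidAlgebra.single gh (1:ℤ) - 1)
          = Φ₁ (del gh.1) * AddMonoidAlgebra.single ((0, gh.2) : G × G) 1 + Φ₂ (del gh.2) := by
        rw [hΦ₁, hΦ₂, mapDomain_del, mapDomain_del]
        have e1 : (AddMonoidHom.inl G G) gh.1 = ((gh.1, 0) : G × G) := rfl
        have e2 : (AddMonoidHom.inr G G) gh.2 = ((0, gh.2) : G × G) := rfl
        rw [e1, e2, del, del, sub_mul, AddMonoidAlgebra.single_mul_single, one_mul]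
        have : ((gh.1, 0) : G × G) + (0, gh.2) = gh := by ext <;> simp
        rw [this]
        ring
      rw [SetLike.mem_coe]
      rw [hid]
      refine Ideal.add_mem _ ?_ ?_
      · refine Submodule.mem_sup_left ?_
        exact Ideal.mul_mem_right _ _ (Ideal.mem_map_of_mem Φ₁ (del_mem gh.1))
      · exact Submodule.mem_sup_right (Ideal.mem_map_of_mem Φ₂ (del_mem gh.2))
    have h2 : augIdeal (G × G) ^ k
        ≤ ∑ ij ∈ Finset.HasAntidiagonal.antidiagonal k, Ideal.map Φ₁ (augIdeal G) ^ ij.1 * Ideal.map Φ₂ (augIdeal G) ^ ij.2 :=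
      le_trans (Ideal.pow_right_mono hKK k) (ideal_add_pow_le _ _ k)
    refine le_trans h2 (ideal_sum_le _ _ _ fun ij hij => ?_)
    rw [Finset.HasAntidiagonal.mem_antidiagonal] at hij
    rw [← Ideal.map_pow, ← Ideal.map_pow]
    refine Ideal.mul_le.mpr fun a ha b hb => ?_
    -- span inductions
    refine Submodule.span_induction
      (p := fun a _ => ∀ b ∈ Ideal.map Φ₂ (augIdeal G ^ ij.2), a * b ∈ T) ?_ ?_ ?_ ?_ ha b hb
    · rintro _ ⟨s, hs, rfl⟩ b hb
      refine Submodule.span_induction (p := fun b _ => Φ₁ s * b ∈ T) ?_ ?_ ?_ ?_ hb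
      · rintro _ ⟨t, ht, rfl⟩
        intro y
        show groupRingAct (Φ₁ s * Φ₂ t) w y ∈ (J ^ E).toAddSubgroup
        rw [hΦ₁, hΦ₂, act_inl_inr_mul]
        have := Ideal.mul_mem_mul (hu ij.1 (by omega) s hs y.1) (hv ij.2 (by omega) t ht y.2)
        rw [← pow_add] at this
        exact Ideal.pow_le_pow_right (hE ij.1 ij.2 hij) this
      · simp [mul_zero, T.zero_mem]
      · intro b₁ b₂ _ _ h1 h2
        rw [mul_add]; exact T.add_mem h1 h2
      · intro c b _ h1
        rw [smul_eq_mul, mul_left_comm]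
        exact T.mul_mem_left c h1
    · intro b _; rw [zero_mul]; exact T.zero_mem
    · intro a₁ a₂ _ _ h1 h2 b hb
      rw [add_mul]; exact T.add_mem (h1 b hb) (h2 b hb)
    · intro c a _ h1 b hb
      rw [smul_eq_mul, mul_assoc]
      exact T.mul_mem_left c (h1 b hb)
  exact key (mapDomain_mem_pow dg hr) (dg x)
end Filt

theorem act_sub_left (r s : AddMonoidAlgebra ℤ G) (f : G → B) :
    groupRingAct (r - s) f = groupRingAct r f - groupRingAct s f := by
  rw [eq_sub_iff_add_eq, ← act_add_left, sub_add_cancel]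

theorem act_sub_right (r : AddMonoidAlgebra ℤ G) (f g : G → B) :
    groupRingAct r (f - g) = groupRingAct r f - groupRingAct r g := by
  rw [eq_sub_iff_add_eq, ← act_add_right, sub_add_cancel]

theorem act_del (g : G) (f : G → B) (x : G) :
    groupRingAct (del g) f x = f (x + g) - f x := by
  rw [del, act_sub_left]
  simp only [Pi.sub_apply, act_single, one_smul]
  rw [act_one]

theorem act_const {r : AddMonoidAlgebra ℤ G} (hr : r ∈ augIdeal G) (b : B) :
    groupRingAct r (fun _ => b) = 0 := by
  rw [← mem_annih_iff]
  refine Ideal.span_le.mpr ?_ hr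
  rintro _ ⟨a, rfl⟩
  rw [SetLike.mem_coe, mem_annih_iff]
  funext x
  rw [← del, act_del]
  simp

theorem act_mul_const {R : Type*} [CommRing R] (r : AddMonoidAlgebra ℤ G) (u : G → R)
    (c : R) (x : G) :
    groupRingAct r (fun y => u y * c) x = groupRingAct r u x * c := by
  unfold groupRingAct
  rw [Finsupp.sum_mul]
  apply Finsupp.sum_congr
  intro a _
  rw [smul_mul_assoc]

theorem annih_shift {m : ℕ} {f : G → B} (hf : augIdeal G ^ (m + 1) ≤ annih f) (g : G) :
    augIdeal G ^ m ≤ annih (groupRingAct (del g) f) := by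
  intro r hr
  rw [mem_annih_iff, ← act_mul]
  have : r * del g ∈ augIdeal G ^ (m + 1) := by
    rw [pow_succ]
    exact Ideal.mul_mem_mul hr (del_mem g)
  exact mem_annih_iff.mp (hf this)

/-- `tau R₀ f = τ ∘ f : G → R₀[B]`. -/
noncomputable def tau (R₀ : Type*) [CommRing R₀] (f : G → B) : G → AddMonoidAlgebra R₀ B :=
  fun x => AddMonoidAlgebra.single (f x) 1

theorem act_del_tau {R₀ : Type*} [CommRing R₀] (f : G → B) (g : G) (x : G) :
    groupRingAct (del g) (tau R₀ f) x
      = tau R₀ f x * (AddMonoidAlgebra.single (f (x + g) - f x) (1 : R₀) - 1) := by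
  rw [act_del, mul_sub, mul_one]
  show AddMonoidAlgebra.single (f (x+g)) 1 - AddMonoidAlgebra.single (f x) 1
    = AddMonoidAlgebra.single (f x) 1 * AddMonoidAlgebra.single (f (x + g) - f x) (1:R₀) - _
  rw [AddMonoidAlgebra.single_mul_single, mul_one]
  congr 2
  abel

theorem delProd_succ {k : ℕ} (g : Fin (k + 1) → G) :
    delProd g = delProd (fun i => g i.succ) * del (g 0) := by
  rw [delProd, Fin.prod_univ_succ, mul_comm, delProd]

theorem ceil_arith (m i j k : ℕ) (hm : 1 ≤ m) (hk : i + j = k) :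
    (k + 1 + m) / (m + 1) ≤ (i + m) / (m + 1) + max 1 ((j + m - 1) / m) := by
  set a := (i + m) / (m + 1) with ha
  set t := max 1 ((j + m - 1) / m) with ht
  have ht1 : 1 ≤ t := le_max_left _ _
  have hfact1 : i ≤ (m + 1) * a := by
    have := (Nat.div_le_iff_le_mul_add_pred (by omega : 0 < m + 1)
      (a := i + m) (c := a)).mp (le_of_eq ha.symm)
    omega
  have hfact2 : j ≤ m * t := by
    rcases Nat.eq_zero_or_pos j with hj | hj
    · omega
    · have h1 : (j + m - 1) / m ≤ t := le_max_right _ _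
      have := (Nat.div_le_iff_le_mul_add_pred (by omega : 0 < m)
        (a := j + m - 1) (c := t)).mp h1
      omega
  rw [Nat.div_le_iff_le_mul_add_pred (by omega : 0 < m + 1)]
  have hexp : (m + 1) * (a + t) = (m + 1) * a + m * t + t := by ring
  omega

theorem q_lemma {R₀ : Type*} [CommRing R₀] (m : ℕ) (hm : 1 ≤ m) :
    ∀ f : G → B, augIdeal G ^ (m + 1) ≤ annih f →
      ∀ k : ℕ, ∀ r ∈ augIdeal G ^ k, ∀ x,
        groupRingAct r (tau R₀ f) x ∈ augIdealR R₀ B ^ ((k + m - 1) / m) := by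
  induction m, hm using Nat.le_induction with
  | base =>
    intro f hf k
    induction k with
    | zero =>
      intro r hr x
      simpa using Submodule.mem_top
    | succ k ihk =>
      have hE : (k + 1 + 1 - 1) / 1 = k + 1 := by omega
      rw [hE]
      have hconst : ∀ g x : G, f (x + g) - f x = f (0 + g) - f 0 := by
        intro g x
        have h2 : del x * del g ∈ augIdeal G ^ 2 := by
          rw [pow_two]; exact Ideal.mul_mem_mul (del_mem x) (del_mem g)
        have h3 := congrFun (mem_annih_iff.mp (hf h2)) 0
        rw [act_mul, act_del, act_del, act_del, Pi.zero_apply] at h3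
        simp only [zero_add] at h3
        simp only [zero_add]
        exact sub_eq_zero.mp h3
      have key : augIdeal G ^ (k + 1)
          ≤ vIdeal (augIdealR R₀ B ^ (k + 1)).toAddSubgroup (tau R₀ f) := by
        rw [pow_aug_le_iff]
        intro g
        rw [mem_vIdeal_iff]
        intro x
        rw [Submodule.mem_toAddSubgroup, delProd_succ, act_mul]
        have hfun : groupRingAct (del (g 0)) (tau R₀ f)
            = fun y => tau R₀ f y
                * (AddMonoidAlgebra.single (f (0 + g 0) - f 0) (1 : R₀) - 1) := by
          funext y
          rw [act_del_tau, hconst (g 0) y]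
        rw [hfun, act_mul_const, pow_succ]
        refine Ideal.mul_mem_mul ?_ (Ideal.subset_span ⟨_, rfl⟩)
        have hE0 : (k + 1 - 1) / 1 = k := by omega
        have := ihk (delProd fun i => g i.succ) (delProd_mem _) x
        rwa [hE0] at this
      intro r hr x
      exact (Submodule.mem_toAddSubgroup _).mp (key hr x)
  | succ m hm ihm =>
    intro f hf k
    induction k using Nat.strong_induction_on with
    | _ k ihk =>
      cases k with
      | zero =>
        intro r hr x
        have hE : (0 + (m + 1) - 1) / (m + 1) = 0 := Nat.div_eq_of_lt (by omega)
        rw [hE, pow_zero, Ideal.one_eq_top]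
        exact Submodule.mem_top
      | succ k =>
        have key : augIdeal G ^ (k + 1)
            ≤ vIdeal (augIdealR R₀ B ^ ((k + 1 + (m + 1) - 1) / (m + 1))).toAddSubgroup
              (tau R₀ f) := by
          rw [pow_aug_le_iff]
          intro g
          rw [mem_vIdeal_iff]
          intro x
          rw [Submodule.mem_toAddSubgroup, delProd_succ, act_mul]
          have hfun : groupRingAct (del (g 0)) (tau R₀ f)
              = fun y => tau R₀ f y
                  * (tau R₀ (groupRingAct (del (g 0)) f) y - 1) := by
            funext y
            rw [act_del_tau]
            congr 2
            rw [tau, act_del]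
          rw [hfun]
          refine filt_mul (augIdealR R₀ B) (tau R₀ f)
            (fun y => tau R₀ (groupRingAct (del (g 0)) f) y - 1) k
            ((k + 1 + (m + 1) - 1) / (m + 1))
            (fun i => (i + (m + 1) - 1) / (m + 1))
            (fun j => max 1 ((j + m - 1) / m))
            ?_ ?_ ?_ (delProd fun i => g i.succ) (delProd_mem _) x
          · intro i hik r' hr' x''
            exact ihk i (by omega) r' hr' x''
          · intro j hjk r' hr' x''
            rcases Nat.eq_zero_or_pos j with hj | hj
            · subst hj
              have hJ1 : max 1 ((0 + m - 1) / m) = 1 := by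
                have h0 : (0 + m - 1) / m = 0 := Nat.div_eq_of_lt (by omega)
                rw [h0]
                simp
              beta_reduce
              rw [hJ1, pow_one]
              unfold groupRingAct
              rw [Finsupp.sum]
              apply Submodule.sum_mem
              intro a _
              have hmem : tau R₀ (groupRingAct (del (g 0)) f) (x'' + a) - 1
                  ∈ augIdealR R₀ B :=
                Ideal.subset_span ⟨groupRingAct (del (g 0)) f (x'' + a), rfl⟩
              exact zsmul_mem hmem _
            · have hmax : max 1 ((j + m - 1) / m) = (j + m - 1) / m := by
                have h1 : 1 ≤ (j + m - 1) / m := by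
                  rw [Nat.le_div_iff_mul_le (by omega)]
                  omega
                exact max_eq_right h1
              beta_reduce
              rw [hmax]
              have hsub : (fun y => tau R₀ (groupRingAct (del (g 0)) f) y - 1)
                  = (tau R₀ (groupRingAct (del (g 0)) f)) - (fun _ => 1) := rfl
              rw [hsub, act_sub_right, Pi.sub_apply]
              have hc : groupRingAct r' (fun _ => (1 : AddMonoidAlgebra R₀ B)) = 0 :=
                act_const (Ideal.pow_le_self (by omega) hr') 1
              rw [hc, Pi.zero_apply, sub_zero]
              exact ihm (groupRingAct (del (g 0)) f) (annih_shift hf (g 0)) j r' hr' x''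
          · intro i j hij
            have h1 := ceil_arith m i j k (by omega) hij
            have e1 : k + 1 + (m + 1) - 1 = k + 1 + m := by omega
            have e2 : i + (m + 1) - 1 = i + m := by omega
            beta_reduce
            rw [e1, e2]
            exact h1
        intro r hr x
        exact (Submodule.mem_toAddSubgroup _).mp (key hr x)

theorem annih_mul {R : Type*} [CommRing R] (u v : G → R) (a b : ℕ)
    (hu : augIdeal G ^ (a + 1) ≤ annih u) (hv : augIdeal G ^ (b + 1) ≤ annih v) :
    augIdeal G ^ (a + b + 1) ≤ annih fun y => u y * v y := by
  intro r hr
  rw [mem_annih_iff]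
  funext x
  have hres := filt_mul (⊥ : Ideal R) u v (a + b + 1) 1
      (fun i => if a + 1 ≤ i then 1 else 0) (fun j => if b + 1 ≤ j then 1 else 0)
      ?_ ?_ ?_ r hr x
  · rw [pow_one] at hres
    simpa using hres
  · intro i _ r' hr' x'
    beta_reduce
    by_cases hia : a + 1 ≤ i
    · rw [if_pos hia, pow_one]
      have h2 : r' ∈ augIdeal G ^ (a + 1) := Ideal.pow_le_pow_right hia hr'
      have h3 := congrFun (mem_annih_iff.mp (hu h2)) x'
      rw [Pi.zero_apply] at h3
      simpa [h3] using Submodule.zero_mem _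
    · rw [if_neg hia, pow_zero, Ideal.one_eq_top]; exact Submodule.mem_top
  · intro j _ r' hr' x'
    beta_reduce
    by_cases hjb : b + 1 ≤ j
    · rw [if_pos hjb, pow_one]
      have h2 : r' ∈ augIdeal G ^ (b + 1) := Ideal.pow_le_pow_right hjb hr'
      have h3 := congrFun (mem_annih_iff.mp (hv h2)) x'
      rw [Pi.zero_apply] at h3
      simpa [h3] using Submodule.zero_mem _
    · rw [if_neg hjb, pow_zero, Ideal.one_eq_top]; exact Submodule.mem_top
  · intro i j hij
    beta_reduce
    by_cases hia : a + 1 ≤ i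
    · rw [if_pos hia]
      omega
    · rw [if_neg hia, if_pos (show b + 1 ≤ j by omega)]

theorem annih_prod {R : Type*} [CommRing R] {ι : Type*} (s : Finset ι) (u : ι → G → R)
    (d : ι → ℕ) (hu : ∀ i ∈ s, augIdeal G ^ (d i + 1) ≤ annih (u i)) :
    augIdeal G ^ ((∑ i ∈ s, d i) + 1) ≤ annih fun y => ∏ i ∈ s, u i y := by
  classical
  induction s using Finset.induction_on with
  | empty =>
    intro r hr
    rw [mem_annih_iff]
    simp only [Finset.prod_empty]
    have : r ∈ augIdeal G := Ideal.pow_le_self one_ne_zero (by simpa using hr)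
    exact act_const this 1
  | @insert a s' hns ih =>
    have h1 := annih_mul (u a) (fun y => ∏ i ∈ s', u i y) (d a) (∑ i ∈ s', d i)
      (hu a (Finset.mem_insert_self a s'))
      (ih fun i hi => hu i (Finset.mem_insert_of_mem hi))
    have e1 : (∑ i ∈ insert a s', d i) = d a + ∑ i ∈ s', d i := Finset.sum_insert hns
    rw [e1]
    have e2 : (fun y => ∏ i ∈ insert a s', u i y)
        = fun y => u a y * ∏ i ∈ s', u i y := by
      funext y; exact Finset.prod_insert hns
    rw [e2]
    exact h1

theorem act_sum {ι : Type*} (s : Finset ι) (r : ι → AddMonoidAlgebra ℤ G) (f : G → B)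
    (x : G) : groupRingAct (∑ i ∈ s, r i) f x = ∑ i ∈ s, groupRingAct (r i) f x := by
  classical
  induction s using Finset.induction_on with
  | empty => simp [act_zero_left]
  | insert a s' hns ih =>
    rw [Finset.sum_insert hns, Finset.sum_insert hns, act_add_left, Pi.add_apply, ih]

section Bridge
variable (p : ℕ)

/-- Reduction of coefficients `ℤ[G] → (ℤ/p)[G]`. -/
noncomputable def redHom : AddMonoidAlgebra ℤ G →+* AddMonoidAlgebra (ZMod p) G :=
  AddMonoidAlgebra.liftNCRingHom
    ((AddMonoidAlgebra.singleZeroRingHom).comp (Int.castRingHom (ZMod p)))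
    (AddMonoidAlgebra.of (ZMod p) G) (fun _ _ => Commute.all _ _)

theorem redHom_single (g : G) (z : ℤ) :
    redHom (G := G) p (AddMonoidAlgebra.single g z)
      = AddMonoidAlgebra.single g (z : ZMod p) := by
  unfold redHom AddMonoidAlgebra.liftNCRingHom
  show AddMonoidAlgebra.liftNC _ _ (AddMonoidAlgebra.single g z) = _
  rw [AddMonoidAlgebra.liftNC_single]
  show AddMonoidAlgebra.single 0 ((z : ZMod p)) * AddMonoidAlgebra.single g 1 = _
  rw [AddMonoidAlgebra.single_mul_single, zero_add, mul_one]

theorem redHom_eq_mapRange (r : AddMonoidAlgebra ℤ G) :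
    (redHom (G := G) p r).coeff = Finsupp.mapRange (fun z : ℤ => (z : ZMod p)) (by simp) r.coeff := by
  induction r using AddMonoidAlgebra.induction_linear with
  | zero => simp
  | add u v hu hv =>
    rw [map_add, AddMonoidAlgebra.coeff_add, hu, hv]
    exact (Finsupp.mapRange_add (by intro a b; push_cast; ring) u.coeff v.coeff).symm
  | single a z => rw [redHom_single, AddMonoidAlgebra.coeff_single, AddMonoidAlgebra.coeff_single, Finsupp.mapRange_single]

theorem redHom_surjective : Function.Surjective (redHom (G := G) p) := by
  intro s
  induction s using AddMonoidAlgebra.induction_linear with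
  | zero => exact ⟨0, map_zero _⟩
  | add u v hu hv =>
    obtain ⟨u', hu'⟩ := hu; obtain ⟨v', hv'⟩ := hv
    exact ⟨u' + v', by rw [map_add, hu', hv']⟩
  | single a z =>
    obtain ⟨z', hz'⟩ := ZMod.intCast_surjective (n := p) z
    exact ⟨AddMonoidAlgebra.single a z', by rw [redHom_single, hz']⟩

theorem redHom_map_aug :
    Ideal.map (redHom (G := G) p) (augIdeal G) = augIdealR (ZMod p) G := by
  apply le_antisymm
  · rw [augIdeal, augIdealR, Ideal.map_span, Ideal.span_le]
    rintro _ ⟨x, ⟨a, rfl⟩, rfl⟩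
    rw [map_sub, map_one, redHom_single, Int.cast_one]
    exact Ideal.subset_span ⟨a, rfl⟩
  · rw [augIdealR, Ideal.span_le]
    rintro _ ⟨a, rfl⟩
    have hx : (AddMonoidAlgebra.single a 1 - 1 : AddMonoidAlgebra (ZMod p) G)
        = redHom (G := G) p (AddMonoidAlgebra.single a 1 - 1) := by
      rw [map_sub, map_one, redHom_single, Int.cast_one]
    rw [SetLike.mem_coe, hx]
    exact Ideal.mem_map_of_mem _ (del_mem a)

theorem bridge [NeZero p] (h : G → ZMod p) {k : ℕ} (hk : augIdeal G ^ k ≤ annih h)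
    {r : AddMonoidAlgebra ℤ G} (hr : redHom (G := G) p r ∈ augIdealR (ZMod p) G ^ k) :
    groupRingAct r h = 0 := by
  have hr2 : redHom (G := G) p r ∈ Ideal.map (redHom (G := G) p) (augIdeal G ^ k) := by
    rw [Ideal.map_pow, redHom_map_aug]; exact hr
  obtain ⟨r', hr', hrr⟩ :=
    (Ideal.mem_map_iff_of_surjective (redHom (G := G) p)
      (redHom_surjective (G := G) p)).mp hr2
  have hq : groupRingAct (r - r') h = 0 := by
    have hker : ∀ g : G, (p : ℤ) ∣ (r - r').coeff g := by
      intro g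
      have hz : redHom (G := G) p (r - r') = 0 := by rw [map_sub, hrr, sub_self]
      have h3 := congrArg (fun u : AddMonoidAlgebra (ZMod p) G => u.coeff g) hz
      simp only [redHom_eq_mapRange] at h3
      simp only [Finsupp.mapRange_apply, Finsupp.coe_zero, Pi.zero_apply] at h3
      exact (ZMod.intCast_zmod_eq_zero_iff_dvd _ p).mp (by simpa using h3)
    funext x
    rw [Pi.zero_apply]
    unfold groupRingAct
    rw [Finsupp.sum]
    apply Finset.sum_eq_zero
    intro a _
    have hz : (((r - r').coeff a : ℤ) : ZMod p) = 0 :=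
      (ZMod.intCast_zmod_eq_zero_iff_dvd _ p).mpr (hker a)
    rw [zsmul_eq_mul, hz, zero_mul]
  have h1 : groupRingAct r' h = 0 := mem_annih_iff.mp (hk hr')
  have h2 := act_add_left (r - r') r' h
  rw [sub_add_cancel, hq, h1, add_zero] at h2
  exact h2
end Bridge

theorem mapDomainR_mem_pow {R₀ : Type*} [CommRing R₀] (φ : G →+ H) {k : ℕ}
    {r : AddMonoidAlgebra R₀ G} (hr : r ∈ augIdealR R₀ G ^ k) :
    AddMonoidAlgebra.mapDomainRingHom R₀ φ r ∈ augIdealR R₀ H ^ k := by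
  have h1 : Ideal.map (AddMonoidAlgebra.mapDomainRingHom R₀ φ) (augIdealR R₀ G)
      ≤ augIdealR R₀ H := by
    rw [augIdealR, Ideal.map_span, Ideal.span_le]
    rintro _ ⟨x, ⟨a, rfl⟩, rfl⟩
    have : AddMonoidAlgebra.mapDomainRingHom R₀ φ (AddMonoidAlgebra.single a 1 - 1)
        = AddMonoidAlgebra.single (φ a) 1 - 1 := by
      rw [map_sub, map_one]
      congr 1
      exact AddMonoidAlgebra.mapDomain_single
    rw [this]
    exact Ideal.subset_span ⟨φ a, rfl⟩
  have h2 := Ideal.mem_map_of_mem (AddMonoidAlgebra.mapDomainRingHom R₀ φ) hr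
  rw [Ideal.map_pow] at h2
  exact Ideal.pow_right_mono h1 k h2

theorem prod_single_one {R₀ : Type*} [CommRing R₀] {ι : Type*} (s : Finset ι) (x : ι → G) :
    (∏ i ∈ s, AddMonoidAlgebra.single (x i) (1 : R₀))
      = AddMonoidAlgebra.single (∑ i ∈ s, x i) 1 := by
  classical
  induction s using Finset.induction_on with
  | empty => simp [AddMonoidAlgebra.one_def]
  | @insert a s' hns ih =>
    rw [Finset.prod_insert hns, Finset.sum_insert hns, ih,
      AddMonoidAlgebra.single_mul_single, one_mul]

theorem prod_pow_mem {R' : Type*} [CommRing R'] (K : Ideal R') {ι : Type*} (s : Finset ι)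
    (x : ι → R') (c : ℕ) (h : ∀ i ∈ s, x i ∈ K ^ c) :
    (∏ i ∈ s, x i) ∈ K ^ (s.card * c) := by
  classical
  induction s using Finset.induction_on with
  | empty =>
    rw [Finset.prod_empty, Finset.card_empty, zero_mul, pow_zero, Ideal.one_eq_top]
    exact Submodule.mem_top
  | @insert a s' hns ih =>
    rw [Finset.prod_insert hns, Finset.card_insert_of_notMem hns]
    have e : (s'.card + 1) * c = c + s'.card * c := by ring
    rw [e, pow_add]
    exact Ideal.mul_mem_mul (h a (Finset.mem_insert_self a s'))
      (ih fun i hi => h i (Finset.mem_insert_of_mem hi))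

section Sigma
variable (R₀ : Type*) [CommRing R₀] (A : Type*) [AddCommGroup A] [Fintype A]

noncomputable def sigmaEl : AddMonoidAlgebra R₀ A := ∑ a : A, AddMonoidAlgebra.single a 1

theorem sigmaEl_apply [DecidableEq A] (b : A) : (sigmaEl R₀ A).coeff b = 1 := by
  classical
  rw [sigmaEl]
  show (∑ a : A, AddMonoidAlgebra.single a (1:R₀)).coeff b = 1
  rw [AddMonoidAlgebra.coeff_sum, Finsupp.finset_sum_apply]
  simp [Finsupp.single_apply]

theorem sigma_mem_pow (p : ℕ) (hp : p.Prime) (hA : ∀ x : A, ∃ n : ℕ, p ^ n • x = 0)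
    (hcard : 1 < Fintype.card A) :
    ∃ c : ℕ, 1 ≤ c ∧ augIdealR (ZMod p) A ^ (c + 1) = ⊥ ∧
      sigmaEl (ZMod p) A ∈ augIdealR (ZMod p) A ^ c := by
  classical
  haveI := Fact.mk hp
  haveI hchar : CharP (AddMonoidAlgebra (ZMod p) A) p :=
    charP_of_injective_ringHom
      (f := (AddMonoidAlgebra.singleZeroRingHom : ZMod p →+* AddMonoidAlgebra (ZMod p) A))
      (AddMonoidAlgebra.single_right_injective (m := 0)) p
  have h10 : (1 : AddMonoidAlgebra (ZMod p) A) ≠ 0 := by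
    intro hcon
    rw [AddMonoidAlgebra.one_def] at hcon
    exact one_ne_zero (AddMonoidAlgebra.single_eq_zero.mp hcon)
  have hgen : ∀ a : A, ∃ n : ℕ, (AddMonoidAlgebra.single a (1 : ZMod p) - 1) ^ p ^ n = 0 := by
    intro a
    obtain ⟨n, hn⟩ := hA a
    refine ⟨n, ?_⟩
    rw [sub_pow_char_pow, AddMonoidAlgebra.single_pow, one_pow, hn, one_pow,
      ← AddMonoidAlgebra.one_def, sub_self]
  have hJnil : ∃ ν : ℕ, augIdealR (ZMod p) A ^ ν = ⊥ := by
    haveI h1 : IsNoetherian (ZMod p) (AddMonoidAlgebra (ZMod p) A) := by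
      infer_instance
    haveI : IsNoetherianRing (AddMonoidAlgebra (ZMod p) A) := isNoetherian_of_tower (ZMod p) h1
    obtain ⟨ν, hν⟩ := IsNoetherianRing.isNilpotent_nilradical (AddMonoidAlgebra (ZMod p) A)
    refine ⟨ν, ?_⟩
    have hJle : augIdealR (ZMod p) A ≤ nilradical (AddMonoidAlgebra (ZMod p) A) := by
      rw [augIdealR, Ideal.span_le]
      rintro _ ⟨a, rfl⟩
      rw [SetLike.mem_coe, mem_nilradical]
      obtain ⟨n, hn⟩ := hgen a
      exact ⟨p ^ n, hn⟩
    have h2 := Ideal.pow_right_mono hJle ν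
    rw [hν] at h2
    exact le_bot_iff.mp h2
  have hspec : augIdealR (ZMod p) A ^ (Nat.find hJnil) = ⊥ := Nat.find_spec hJnil
  -- ν ≥ 2
  have hν0 : Nat.find hJnil ≠ 0 := by
    intro hcon
    rw [hcon, pow_zero, Ideal.one_eq_top] at hspec
    have : (1 : AddMonoidAlgebra (ZMod p) A) ∈ (⊥ : Ideal (AddMonoidAlgebra (ZMod p) A)) := by
      rw [← hspec]; exact Submodule.mem_top
    exact h10 (Submodule.mem_bot _ |>.mp this)
  have hν1 : Nat.find hJnil ≠ 1 := by
    intro hcon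
    rw [hcon, pow_one] at hspec
    obtain ⟨a₀, ha₀⟩ := Fintype.exists_ne_of_one_lt_card hcard (0 : A)
    have hmem : AddMonoidAlgebra.single a₀ (1 : ZMod p) - 1 ∈ augIdealR (ZMod p) A :=
      Ideal.subset_span ⟨a₀, rfl⟩
    rw [hspec, Submodule.mem_bot, sub_eq_zero, AddMonoidAlgebra.one_def] at hmem
    have h2 := congrArg (fun u : AddMonoidAlgebra (ZMod p) A => u.coeff 0) hmem
    simp [Finsupp.single_apply, ha₀] at h2
  refine ⟨Nat.find hJnil - 1, by omega, ?_, ?_⟩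
  · have e : Nat.find hJnil - 1 + 1 = Nat.find hJnil := by omega
    rw [e]; exact hspec
  · -- sigma in J^(ν-1)
    have hne : augIdealR (ZMod p) A ^ (Nat.find hJnil - 1) ≠ ⊥ :=
      Nat.find_min hJnil (by omega)
    obtain ⟨u, huJ, hu0⟩ := Submodule.ne_bot_iff _ |>.mp hne
    have htrans : ∀ a : A, AddMonoidAlgebra.single a (1 : ZMod p) * u = u := by
      intro a
      have h1 : u * (AddMonoidAlgebra.single a (1 : ZMod p) - 1)
          ∈ augIdealR (ZMod p) A ^ (Nat.find hJnil - 1) * augIdealR (ZMod p) A :=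
        Ideal.mul_mem_mul huJ (Ideal.subset_span ⟨a, rfl⟩)
      rw [← pow_succ] at h1
      have e : Nat.find hJnil - 1 + 1 = Nat.find hJnil := by omega
      rw [e, hspec, Submodule.mem_bot, mul_sub, mul_one, sub_eq_zero, mul_comm] at h1
      exact h1
    have hcoeff : ∀ b : A, u.coeff b = u.coeff 0 := by
      intro b
      have h1 := congrArg (fun w : AddMonoidAlgebra (ZMod p) A => w.coeff b) (htrans b)
      rw [← h1, AddMonoidAlgebra.coeff_single_mul_apply, one_mul, neg_add_cancel]
    have hc0 : u.coeff 0 ≠ 0 := by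
      intro hcon
      apply hu0
      ext b
      rw [hcoeff b, hcon]
      rfl
    have hσ : sigmaEl (ZMod p) A = (u.coeff 0)⁻¹ • u := by
      ext b
      rw [sigmaEl_apply]
      rw [AddMonoidAlgebra.coeff_smul_apply, hcoeff b, smul_eq_mul, inv_mul_cancel₀ hc0]
    rw [hσ]
    exact Submodule.smul_of_tower_mem _ _ huJ

end Sigma

theorem sigma_prod (R₀ : Type*) [CommRing R₀] (A : Type*) [AddCommGroup A] [Fintype A]
    (N : ℕ) :
    (∏ j : Fin N, AddMonoidAlgebra.mapDomainRingHom R₀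
        (AddMonoidHom.single (fun _ : Fin N => A) j) (sigmaEl R₀ A))
      = sigmaEl R₀ (Fin N → A) := by
  classical
  have hmap : ∀ j : Fin N, AddMonoidAlgebra.mapDomainRingHom R₀
      (AddMonoidHom.single (fun _ : Fin N => A) j) (sigmaEl R₀ A)
      = ∑ a : A, AddMonoidAlgebra.single (Pi.single j a : Fin N → A) (1 : R₀) := by
    intro j
    rw [sigmaEl, map_sum]
    apply Finset.sum_congr rfl
    intro a _
    show AddMonoidAlgebra.mapDomain _ (AddMonoidAlgebra.single a (1:R₀)) = _
    rw [AddMonoidAlgebra.mapDomain_single]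
    congr 1
  calc (∏ j : Fin N, AddMonoidAlgebra.mapDomainRingHom R₀
        (AddMonoidHom.single (fun _ : Fin N => A) j) (sigmaEl R₀ A))
      = ∏ j : Fin N, ∑ a : A, AddMonoidAlgebra.single (Pi.single j a : Fin N → A) (1 : R₀) := by
        exact Finset.prod_congr rfl fun j _ => hmap j
    _ = ∑ g ∈ Fintype.piFinset (fun _ : Fin N => (Finset.univ : Finset A)),
          ∏ j : Fin N, AddMonoidAlgebra.single (Pi.single j (g j) : Fin N → A) (1 : R₀) := by
        rw [Finset.prod_univ_sum]
    _ = sigmaEl R₀ (Fin N → A) := by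
        rw [Fintype.piFinset_univ, sigmaEl]
        apply Finset.sum_congr rfl
        intro g _
        rw [prod_single_one]
        congr 1
        exact Finset.univ_sum_single g

theorem indicator_annih {R₀ : Type*} [CommRing R₀] {A' : Type*} [AddCommGroup A']
    [DecidableEq A'] (c d : ℕ) (hc : augIdealR R₀ A' ^ (c + 1) = ⊥) (f : G → A')
    (hf : augIdeal G ^ (d + 1) ≤ annih f) :
    augIdeal G ^ (c * d + 1) ≤ annih fun x => if f x = 0 then (1 : R₀) else 0 := by
  have hind : (fun x => if f x = 0 then (1 : R₀) else 0)
      = fun x => ((Finsupp.applyAddHom (0 : A')).comp (AddMonoidAlgebra.coeffAddEquiv (R := R₀) (M := A')).toAddMonoidHom) (tau R₀ f x) := by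
    funext x
    show _ = (AddMonoidAlgebra.single (f x) (1:R₀)).coeff 0
    rw [AddMonoidAlgebra.coeff_single, Finsupp.single_apply]
  rcases Nat.eq_zero_or_pos d with hd | hd
  · subst hd
    have e : c * 0 + 1 = 1 := by omega
    rw [e, pow_aug_le_iff]
    intro g
    rw [mem_annih_iff]
    funext x
    have hg : delProd g = del (g 0) := by
      rw [delProd, Fin.prod_univ_one]
    have hfx : f (x + g 0) = f x := by
      have h0 : del (g 0) ∈ augIdeal G ^ (0 + 1) := by
        rw [zero_add, pow_one]; exact del_mem (g 0)
      have h1 := congrFun (mem_annih_iff.mp (hf h0)) x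
      rw [act_del, Pi.zero_apply] at h1
      exact sub_eq_zero.mp h1
    rw [hg, act_del, hfx, sub_self, Pi.zero_apply]
  · intro r hr
    rw [mem_annih_iff, hind]
    funext x
    rw [act_post ((Finsupp.applyAddHom (0 : A')).comp (AddMonoidAlgebra.coeffAddEquiv (R := R₀) (M := A')).toAddMonoidHom) r (tau R₀ f) x]
    have hmem := q_lemma (R₀ := R₀) d hd f hf (c * d + 1) r hr x
    have he : (c * d + 1 + d - 1) / d = c + 1 := by
      have e0 : c * d + 1 + d - 1 = (c + 1) * d := by
        have : (c + 1) * d = c * d + d := by ring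
        omega
      rw [e0, Nat.mul_div_cancel _ hd]
    rw [he, hc] at hmem
    have hz : groupRingAct r (tau R₀ f) x = 0 := by simpa using hmem
    rw [hz, map_zero, Pi.zero_apply]

end Act

theorem exists_nat_fdeg {G B : Type*} [AddCommGroup G] [AddCommGroup B] {f : G → B}
    (hf : fdeg f ≠ ⊤) :
    ∃ d : ℕ, (d : ℕ∞) ≤ fdeg f ∧ augIdeal G ^ (d + 1) ≤ annih f := by
  classical
  have hS : {N : ℕ∞ | ∃ n : ℕ, N = (n : ℕ∞) ∧
      ∀ r ∈ augIdeal G ^ (n + 1), groupRingAct r f = 0}.Nonempty := by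
    by_contra hcon
    rw [Set.not_nonempty_iff_eq_empty] at hcon
    apply hf
    rw [fdeg, hcon, sInf_empty]
  have hTne : {n : ℕ | ∀ r ∈ augIdeal G ^ (n + 1), groupRingAct r f = 0}.Nonempty := by
    obtain ⟨s, n, rfl, hs⟩ := hS
    exact ⟨n, hs⟩
  have hmem := Nat.sInf_mem hTne
  refine ⟨sInf {n : ℕ | ∀ r ∈ augIdeal G ^ (n + 1), groupRingAct r f = 0}, ?_, ?_⟩
  · rw [fdeg]
    apply le_sInf
    rintro s ⟨n, rfl, hn⟩
    have hn' : n ∈ {n : ℕ | ∀ r ∈ augIdeal G ^ (n + 1), groupRingAct r f = 0} := hn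
    exact_mod_cast Nat.sInf_le hn'
  · intro r hr
    exact mem_annih_iff.mpr (hmem r hr)

theorem warning_first_group {p : ℕ} (hp : p.Prime) {A : Type*} [AddCommGroup A]
    [Fintype A] (hA : ∀ x : A, ∃ n : ℕ, p ^ n • x = 0) (hcard : 1 < Fintype.card A)
    {N r : ℕ} (hN : 0 < N) (hr : 0 < r) (f : Fin r → ((Fin N → A) → A))
    (hdeg : (N : ℕ∞) > ∑ i : Fin r, fdeg (f i)) :
    p ∣ Nat.card {a : Fin N → A // ∀ i : Fin r, f i a = 0} ∧
      ¬ ∃ a₀ : Fin N → A, ∀ a : Fin N → A, (∀ i : Fin r, f i a = 0) ↔ a = a₀ := by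
  classical
  haveI := Fact.mk hp
  haveI : NeZero p := ⟨hp.ne_zero⟩
  -- extract finite degrees
  have hfin : ∀ i : Fin r, fdeg (f i) ≠ ⊤ := by
    intro i hcon
    have hle : fdeg (f i) ≤ ∑ j : Fin r, fdeg (f j) :=
      Finset.single_le_sum (f := fun j => fdeg (f j)) (fun j _ => zero_le)
        (Finset.mem_univ i)
    rw [hcon] at hle
    exact absurd (lt_of_le_of_lt hle hdeg) (not_lt.mpr le_top)
  choose d hd1 hd2 using fun i => exists_nat_fdeg (hfin i)
  have hcast : ((∑ i : Fin r, d i : ℕ) : ℕ∞) < (N : ℕ∞) := by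
    calc ((∑ i : Fin r, d i : ℕ) : ℕ∞) = ∑ i : Fin r, (d i : ℕ∞) := by push_cast; rfl
      _ ≤ ∑ i : Fin r, fdeg (f i) := Finset.sum_le_sum fun i _ => hd1 i
      _ < N := hdeg
  have hsum : (∑ i : Fin r, d i) + 1 ≤ N := by
    have := ENat.coe_lt_coe.mp hcast
    omega
  -- the constant c from the sigma lemma
  obtain ⟨c, hc1, hc2, hc3⟩ := sigma_mem_pow (A := A) p hp hA hcard
  -- indicator functions
  set u : Fin r → (Fin N → A) → ZMod p :=
    fun i x => if f i x = 0 then (1 : ZMod p) else 0 with hu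
  have hui : ∀ i ∈ (Finset.univ : Finset (Fin r)),
      augIdeal (Fin N → A) ^ (c * d i + 1) ≤ annih (u i) :=
    fun i _ => indicator_annih c (d i) hc2 (f i) (hd2 i)
  have hh := annih_prod Finset.univ u (fun i => c * d i) hui
  have hNc : (∑ i : Fin r, c * d i) + 1 ≤ N * c := by
    have e1 : (∑ i : Fin r, c * d i) = c * ∑ i : Fin r, d i := by
      rw [Finset.mul_sum]
    have e2 : c * ((∑ i : Fin r, d i) + 1) ≤ c * N := Nat.mul_le_mul_left c hsum
    have e3 : c * ((∑ i : Fin r, d i) + 1) = c * (∑ i : Fin r, d i) + c := by ring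
    have e4 : c * N = N * c := by ring
    omega
  have hH : augIdeal (Fin N → A) ^ (N * c)
      ≤ annih (fun y => ∏ i : Fin r, u i y) :=
    le_trans (Ideal.pow_le_pow_right hNc) hh
  -- sigma element
  have hred : redHom (G := Fin N → A) p (sigmaEl ℤ (Fin N → A))
      = sigmaEl (ZMod p) (Fin N → A) := by
    rw [sigmaEl, map_sum, sigmaEl]
    apply Finset.sum_congr rfl
    intro g _
    rw [redHom_single, Int.cast_one]
  have hσmem : sigmaEl (ZMod p) (Fin N → A) ∈ augIdealR (ZMod p) (Fin N → A) ^ (N * c) := by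
    rw [← sigma_prod]
    have := prod_pow_mem (augIdealR (ZMod p) (Fin N → A)) Finset.univ
      (fun j : Fin N => AddMonoidAlgebra.mapDomainRingHom (ZMod p)
        (AddMonoidHom.single (fun _ : Fin N => A) j) (sigmaEl (ZMod p) A)) c
      (fun j _ => mapDomainR_mem_pow _ hc3)
    rwa [Finset.card_univ, Fintype.card_fin] at this
  have hact : groupRingAct (sigmaEl ℤ (Fin N → A)) (fun y => ∏ i : Fin r, u i y) = 0 :=
    bridge p _ hH (by rw [hred]; exact hσmem)
  -- counting
  have hsum0 : ∑ x : Fin N → A, ∏ i : Fin r, u i x = 0 := by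
    have h1 := congrFun hact 0
    rw [Pi.zero_apply, sigmaEl, act_sum] at h1
    rw [← h1]
    apply Finset.sum_congr rfl
    intro g _
    rw [act_single, zero_add, one_smul]
  have hprod : ∀ x : Fin N → A,
      (∏ i : Fin r, u i x) = if (∀ i : Fin r, f i x = 0) then 1 else 0 := by
    intro x
    by_cases hx : ∀ i : Fin r, f i x = 0
    · rw [if_pos hx]
      apply Finset.prod_eq_one
      intro i _
      rw [hu]
      beta_reduce
      rw [if_pos (hx i)]
    · rw [if_neg hx]
      push_neg at hx
      obtain ⟨i₀, hi₀⟩ := hx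
      refine Finset.prod_eq_zero (Finset.mem_univ i₀) ?_
      rw [hu]
      beta_reduce
      rw [if_neg hi₀]
  have hcount : ((Nat.card {a : Fin N → A // ∀ i : Fin r, f i a = 0} : ℕ) : ZMod p) = 0 := by
    have e1 : (∑ x : Fin N → A, ∏ i : Fin r, u i x)
        = ∑ x : Fin N → A, (if (∀ i : Fin r, f i x = 0) then (1 : ZMod p) else 0) :=
      Finset.sum_congr rfl fun x _ => hprod x
    rw [Nat.card_eq_fintype_card, Fintype.card_subtype, ← Finset.sum_boole, ← e1, hsum0]
  have hdvd : p ∣ Nat.card {a : Fin N → A // ∀ i : Fin r, f i a = 0} :=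
    (ZMod.natCast_eq_zero_iff _ p).mp hcount
  refine ⟨hdvd, ?_⟩
  rintro ⟨a₀, ha₀⟩
  haveI : Unique {a : Fin N → A // ∀ i : Fin r, f i a = 0} :=
    { default := ⟨a₀, (ha₀ a₀).mpr rfl⟩
      uniq := by rintro ⟨a, ha⟩; exact Subtype.ext ((ha₀ a).mp ha) }
  rw [Nat.card_unique] at hdvd
  exact hp.ne_one (Nat.dvd_one.mp hdvd)
end
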